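/- Let d ≥ 1 and ε ∈ (0,1]. If a nonzero matrix A ∈ ℝ^{d×d} satisfies the Cordes condition with parameter ε and γ := tr A / ‖A‖_F², then for every matrix M ∈ ℝ^{d×d} one has γ·(A:M)·(tr M) ≥ (tr M)² − √(1−ε)·‖M‖_F·|tr M|. (This pointwise inequality is the integrand-level estimate behind the first step of the coercivity proof (equation (3.16)) in Lemma 3.6.) -/

import Mathlib

open Matrix

/-- Frobenius inner product of two `d × d` real matrices. -/
noncomputable def frobInner {d : ℕ} (A B : Matrix (Fin d) (Fin d) ℝ) : ℝ :=
  ∑ i, ∑ j, A i j * B i j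

/-- Frobenius norm of a `d × d` real matrix. -/
noncomputable def frobNorm {d : ℕ} (A : Matrix (Fin d) (Fin d) ℝ) : ℝ :=
  Real.sqrt (frobInner A A)

/-- The Cordes condition with parameter `ε`. -/
def CordesCond {d : ℕ} (ε : ℝ) (A : Matrix (Fin d) (Fin d) ℝ) : Prop :=
  ((d : ℝ) - 1 + ε) * frobNorm A ^ 2 ≤ trace A ^ 2

lemma frobInner_prod {d : ℕ} (A B : Matrix (Fin d) (Fin d) ℝ) :
    frobInner A B = ∑ p : Fin d × Fin d, A p.1 p.2 * B p.1 p.2 := by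
  rw [frobInner, Fintype.sum_prod_type]

lemma frobInner_self_nonneg {d : ℕ} (A : Matrix (Fin d) (Fin d) ℝ) :
    0 ≤ frobInner A A := by
  apply Finset.sum_nonneg; intro i _; apply Finset.sum_nonneg; intro j _; exact mul_self_nonneg _

lemma frobNorm_sq {d : ℕ} (A : Matrix (Fin d) (Fin d) ℝ) :
    frobNorm A ^ 2 = frobInner A A :=
  Real.sq_sqrt (frobInner_self_nonneg A)

lemma frobInner_abs_le {d : ℕ} (A B : Matrix (Fin d) (Fin d) ℝ) :
    |frobInner A B| ≤ frobNorm A * frobNorm B := by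
  have hAA : Real.sqrt (∑ p : Fin d × Fin d, A p.1 p.2 ^ 2) = frobNorm A := by
    rw [frobNorm, frobInner_prod]; congr 1; apply Finset.sum_congr rfl; intro p _; ring
  have hBB : Real.sqrt (∑ p : Fin d × Fin d, B p.1 p.2 ^ 2) = frobNorm B := by
    rw [frobNorm, frobInner_prod]; congr 1; apply Finset.sum_congr rfl; intro p _; ring
  rw [abs_le]
  constructor
  · have h2 := Real.sum_mul_le_sqrt_mul_sqrt Finset.univ
      (fun p : Fin d × Fin d => -A p.1 p.2) (fun p => B p.1 p.2)
    have e1 : (∑ p : Fin d × Fin d, -A p.1 p.2 * B p.1 p.2) = -frobInner A B := by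
      rw [frobInner_prod, ← Finset.sum_neg_distrib]
      apply Finset.sum_congr rfl; intro p _; ring
    have e2 : (∑ p : Fin d × Fin d, (-A p.1 p.2) ^ 2) = ∑ p : Fin d × Fin d, A p.1 p.2 ^ 2 := by
      apply Finset.sum_congr rfl; intro p _; ring
    rw [e1, e2, hAA, hBB] at h2; linarith
  · have h := Real.sum_mul_le_sqrt_mul_sqrt Finset.univ
      (fun p : Fin d × Fin d => A p.1 p.2) (fun p => B p.1 p.2)
    rw [hAA, hBB] at h; rw [frobInner_prod]; exact h

lemma frobInner_pos {d : ℕ} {A : Matrix (Fin d) (Fin d) ℝ} (hA : A ≠ 0) :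
    0 < frobInner A A := by
  rcases (frobInner_self_nonneg A).lt_or_eq with h | h
  · exact h
  · exfalso; apply hA
    ext i j
    have hz : ∀ p ∈ (Finset.univ : Finset (Fin d × Fin d)), A p.1 p.2 * A p.1 p.2 = 0 := by
      apply (Finset.sum_eq_zero_iff_of_nonneg (fun p _ => mul_self_nonneg _)).mp
      rw [← frobInner_prod, ← h]
    have := hz (i, j) (Finset.mem_univ _)
    simpa using mul_self_eq_zero.mp this

theorem cordes_lower_bound_estimate {d : ℕ} (hd : 1 ≤ d) {ε : ℝ}
    (hε0 : 0 < ε) (hε1 : ε ≤ 1)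
    (A : Matrix (Fin d) (Fin d) ℝ) (hA : A ≠ 0) (hC : CordesCond ε A)
    (M : Matrix (Fin d) (Fin d) ℝ) :
    (trace A / frobNorm A ^ 2) * frobInner A M * trace M
      ≥ trace M ^ 2 - Real.sqrt (1 - ε) * frobNorm M * |trace M| := by
  set s := frobInner A A with hs
  have hspos : 0 < s := frobInner_pos hA
  set t := trace A with ht
  set γ : ℝ := t / s with hγ
  set X : Matrix (Fin d) (Fin d) ℝ := γ • A - 1 with hX
  -- frobInner X M = γ * frobInner A M - trace M
  have hXM : ∀ N : Matrix (Fin d) (Fin d) ℝ,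
      frobInner X N = γ * frobInner A N - trace N := by
    intro N
    simp only [hX, frobInner, Matrix.sub_apply, Matrix.smul_apply,
      smul_eq_mul, sub_mul, Finset.sum_sub_distrib, Finset.mul_sum]
    congr 1
    · apply Finset.sum_congr rfl; intro i _
      apply Finset.sum_congr rfl; intro j _; ring
    · have key : ∀ i : Fin d, (∑ j, (1 : Matrix (Fin d) (Fin d) ℝ) i j * N i j) = N i i := by
        intro i
        rw [Finset.sum_eq_single i]
        · simp
        · intro j _ hji; rw [Matrix.one_apply_ne (Ne.symm hji), zero_mul]
        · intro h; exact absurd (Finset.mem_univ i) h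
      simp_rw [key]
      simp [trace, Matrix.diag]
  -- frobInner X X
  have hXX : frobInner X X = γ ^ 2 * s - 2 * γ * t + d := by
    have h1 : frobInner X X = γ * frobInner A X - trace X := hXM X
    have h2 : frobInner A X = γ * s - t := by
      have : frobInner A X = frobInner X A := by
        simp only [frobInner]; apply Finset.sum_congr rfl; intro i _;
        apply Finset.sum_congr rfl; intro j _; ring
      rw [this, hXM A]
    have h3 : trace X = γ * t - d := by
      simp [hX, trace_smul, trace_sub, trace_one, smul_eq_mul]
      exact Or.inl ht.symm
    rw [h1, h2, h3]; ring
  have hXXval : frobInner X X = (d : ℝ) - t ^ 2 / s := by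
    rw [hXX, hγ]; field_simp; ring
  have hCordes : ((d : ℝ) - 1 + ε) * s ≤ t ^ 2 := by
    have := hC; rwa [CordesCond, frobNorm_sq] at this
  have hXXle : frobInner X X ≤ 1 - ε := by
    rw [hXXval]
    have h2 : (d : ℝ) - 1 + ε ≤ t ^ 2 / s := (le_div_iff₀ hspos).2 hCordes
    linarith
  -- Cauchy–Schwarz
  have hCS : |frobInner X M| ≤ Real.sqrt (1 - ε) * frobNorm M := by
    calc |frobInner X M| ≤ frobNorm X * frobNorm M := frobInner_abs_le X M
    _ ≤ Real.sqrt (1 - ε) * frobNorm M := by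
        apply mul_le_mul_of_nonneg_right _ (Real.sqrt_nonneg _)
        exact Real.sqrt_le_sqrt hXXle
  -- combine
  have key : γ * frobInner A M * trace M = frobInner X M * trace M + trace M ^ 2 := by
    rw [hXM M]; ring
  have habs : frobInner X M * trace M ≥ - (Real.sqrt (1 - ε) * frobNorm M * |trace M|) := by
    have h1 : |frobInner X M * trace M| ≤ Real.sqrt (1 - ε) * frobNorm M * |trace M| := by
      rw [abs_mul]
      exact mul_le_mul_of_nonneg_right hCS (abs_nonneg _)
    linarith [neg_abs_le (frobInner X M * trace M)]
  have : (trace A / frobNorm A ^ 2) = γ := by rw [hγ, frobNorm_sq, ← hs, ← ht]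
  rw [this, key]
  linarith
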